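/- Every (p+)-filter on E is spread. -/

import Mathlib

namespace BlockPaper

variable {F : Type} [Field F]

/-- `X` is an infinite block sequence in `E = ⊕ₙ F`. -/
def IsBlock (X : ℕ → (ℕ →₀ F)) : Prop :=
  (∀ n, X n ≠ 0) ∧ ∀ n, ∀ i ∈ (X n).support, ∀ j ∈ (X (n + 1)).support, i < j

/-- `⟨X⟩`: the linear span of the entries of `X`, with `0` removed. -/
def spanSet (X : ℕ → (ℕ →₀ F)) : Set (ℕ →₀ F) :=
  {v | v ≠ 0 ∧ v ∈ Submodule.span F (Set.range X)}

/-- `⟨X/n⟩`: the span (minus `0`) of the entries of `X` whose supports lie entirely above `n`. -/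
def tailSpanSet (X : ℕ → (ℕ →₀ F)) (n : ℕ) : Set (ℕ →₀ F) :=
  {v | v ≠ 0 ∧ v ∈ Submodule.span F {x : ℕ →₀ F | (∃ k, X k = x) ∧ ∀ i ∈ x.support, n < i}}

/-- `X ⪯ Y`. -/
def PLE (X Y : ℕ → (ℕ →₀ F)) : Prop := spanSet X ⊆ spanSet Y

/-- `X ⪯* Y`. -/
def PLEs (X Y : ℕ → (ℕ →₀ F)) : Prop := ∃ n, tailSpanSet X n ⊆ spanSet Y

/-- A block filter on `E`: a proper filter of subsets of `E ∖ {0}` containing all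
finite-codimensional subspaces (minus `0`) and with a base of sets `⟨X⟩`, `X ∈ E^[∞]`. -/
structure BlockFilter (F : Type) [Field F] where
  sets : Set (Set (ℕ →₀ F))
  nonzero : ∀ S ∈ sets, ∀ v ∈ S, v ≠ 0
  proper : ∅ ∉ sets
  upward : ∀ S ∈ sets, ∀ T : Set (ℕ →₀ F), (∀ v ∈ T, v ≠ 0) → S ⊆ T → T ∈ sets
  inter : ∀ S ∈ sets, ∀ T ∈ sets, S ∩ T ∈ sets
  codim : ∀ V : Submodule F (ℕ →₀ F), Module.Finite F ((ℕ →₀ F) ⧸ V) →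
    {v : ℕ →₀ F | v ≠ 0 ∧ v ∈ V} ∈ sets
  blockBase : ∀ S ∈ sets, ∃ X : ℕ → (ℕ →₀ F),
    IsBlock X ∧ spanSet X ∈ sets ∧ spanSet X ⊆ S

/-- `D ⊆ E` is `𝓕`-dense. -/
def FDense (𝓕 : BlockFilter F) (D : Set (ℕ →₀ F)) : Prop :=
  ∀ X : ℕ → (ℕ →₀ F), IsBlock X → spanSet X ∈ 𝓕.sets →
    ∃ V : Submodule F (ℕ →₀ F), ¬ Module.Finite F V ∧
      (V : Set (ℕ →₀ F)) \ {0} ⊆ spanSet X ∩ D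

/-- `𝓕` is full: every `𝓕`-dense set belongs to `𝓕`. -/
def Full (𝓕 : BlockFilter F) : Prop :=
  ∀ D : Set (ℕ →₀ F), FDense 𝓕 D → D \ {0} ∈ 𝓕.sets

/-- `𝓕` is a `(p)`-filter. -/
def PFilter (𝓕 : BlockFilter F) : Prop :=
  ∀ Xs : ℕ → ℕ → (ℕ →₀ F), (∀ n, IsBlock (Xs n) ∧ spanSet (Xs n) ∈ 𝓕.sets) →
    ∃ X : ℕ → (ℕ →₀ F), IsBlock X ∧ spanSet X ∈ 𝓕.sets ∧ ∀ n, PLEs X (Xs n)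

/-- `𝓕` is a `(p⁺)`-filter: full and a `(p)`-filter. -/
def PPlus (𝓕 : BlockFilter F) : Prop := Full 𝓕 ∧ PFilter 𝓕

/-- A finite block sequence in `E`, as a list. -/
def IsBlockList (l : List (ℕ →₀ F)) : Prop :=
  (∀ v ∈ l, v ≠ 0) ∧
    l.Chain' (fun u v : ℕ →₀ F => ∀ i ∈ u.support, ∀ j ∈ v.support, i < j)

/-- `𝓕` is a strong `(p)`-filter: any family `(X_x⃗)` indexed by finite block sequences,
with each `⟨X_x⃗⟩ ∈ 𝓕`, has a diagonalization `X` with `X/x⃗ ⪯ X_x⃗` for all finite initial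
segments `x⃗` of `X`. -/
def StrongP (𝓕 : BlockFilter F) : Prop :=
  ∀ Xs : List (ℕ →₀ F) → ℕ → (ℕ →₀ F),
    (∀ l, IsBlockList l → IsBlock (Xs l) ∧ spanSet (Xs l) ∈ 𝓕.sets) →
    ∃ X : ℕ → (ℕ →₀ F), IsBlock X ∧ spanSet X ∈ 𝓕.sets ∧
      ∀ k : ℕ, PLE (fun m => X (m + k)) (Xs (List.ofFn fun i : Fin k => X i))

/-- The outcome of a strategy (for II) against a sequence of opposing moves:
the `k`-th value is the strategy applied to the first `k+1` opposing moves. -/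
def outcomeOf {α β : Type*} (st : List α → β) (Ys : ℕ → α) : ℕ → β :=
  fun k => st (List.ofFn fun i : Fin (k + 1) => Ys i)

/-- A legal move for player I in the Gowers game `G[X]`. -/
def LegalG (X Y : ℕ → (ℕ →₀ F)) : Prop := IsBlock Y ∧ PLE Y X

/-- A legal move for player I in the restricted Gowers game `G_𝓕[X]`. -/
def LegalGF (𝓕 : BlockFilter F) (X Y : ℕ → (ℕ →₀ F)) : Prop :=
  IsBlock Y ∧ PLE Y X ∧ spanSet Y ∈ 𝓕.sets

/-- `α` is a strategy for player II in a Gowers-type game whose legal moves for I are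
given by `legal`: against any sequence of legal I-moves, the outcome is a block
sequence whose `k`-th entry lies in the span of I's `k`-th move. -/
def IsStratII (legal : (ℕ → (ℕ →₀ F)) → Prop)
    (α : List (ℕ → (ℕ →₀ F)) → (ℕ →₀ F)) : Prop :=
  ∀ Ys : ℕ → ℕ → (ℕ →₀ F), (∀ k, legal (Ys k)) →
    IsBlock (outcomeOf α Ys) ∧ ∀ k, outcomeOf α Ys k ∈ spanSet (Ys k)

/-- `𝓕` is strategic. -/
def Strategic (𝓕 : BlockFilter F) : Prop :=
  ∀ X : ℕ → (ℕ →₀ F), IsBlock X → spanSet X ∈ 𝓕.sets →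
    ∀ α, IsStratII (LegalG X) α →
      ∃ Ys : ℕ → ℕ → (ℕ →₀ F), (∀ k, LegalG X (Ys k)) ∧
        spanSet (outcomeOf α Ys) ∈ 𝓕.sets

/-- `𝓕` is `+`-strategic. -/
def PlusStrategic (𝓕 : BlockFilter F) : Prop :=
  ∀ X : ℕ → (ℕ →₀ F), IsBlock X → spanSet X ∈ 𝓕.sets →
    ∀ α, IsStratII (LegalGF 𝓕 X) α →
      ∃ Ys : ℕ → ℕ → (ℕ →₀ F), (∀ k, LegalGF 𝓕 X (Ys k)) ∧
        spanSet (outcomeOf α Ys) ∈ 𝓕.sets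

/-- A legal finite position (list of II's moves so far) in a play where I follows `σ`. -/
def LegalPos (σ : List (ℕ →₀ F) → ℕ → (ℕ →₀ F)) (l : List (ℕ →₀ F)) : Prop :=
  IsBlockList l ∧ ∀ k, (h : k < l.length) → l.get ⟨k, h⟩ ∈ spanSet (σ (l.take k))

/-- `σ` is a strategy for player I in the restricted Gowers game `G_𝓕[X]`. -/
def IsStratIGF (𝓕 : BlockFilter F) (X : ℕ → (ℕ →₀ F))
    (σ : List (ℕ →₀ F) → ℕ → (ℕ →₀ F)) : Prop :=
  ∀ l, LegalPos σ l → LegalGF 𝓕 X (σ l)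

/-- `ys` is (the sequence of II's moves of) an infinite play against I's strategy `σ`
in a Gowers-type game; its outcome is `ys` itself. -/
def PlayAgainstI (σ : List (ℕ →₀ F) → ℕ → (ℕ →₀ F)) (ys : ℕ → (ℕ →₀ F)) : Prop :=
  IsBlock ys ∧ ∀ k, ys k ∈ spanSet (σ (List.ofFn fun i : Fin k => ys i))

/-- `ys` is an infinite play against I's strategy `σ` in the asymptotic game `F[X]`. -/
def PlayAgainstIAsymp (X : ℕ → (ℕ →₀ F)) (σ : List (ℕ →₀ F) → ℕ)
    (ys : ℕ → (ℕ →₀ F)) : Prop :=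
  IsBlock ys ∧ ∀ k, ys k ∈ spanSet X ∧
    ∀ i ∈ (ys k).support, σ (List.ofFn fun j : Fin k => ys j) < i

/-- `FIN`: nonempty finite subsets of `ℕ`. -/
abbrev FIN := {s : Finset ℕ // s.Nonempty}

/-- An infinite block sequence in `FIN`. -/
def IsBlockF (A : ℕ → Finset ℕ) : Prop :=
  (∀ n, (A n).Nonempty) ∧ ∀ n, ∀ i ∈ A n, ∀ j ∈ A (n + 1), i < j

/-- `⟨A⟩`: unions of finitely many (at least one) entries of `A`. -/
def finUnions (A : ℕ → Finset ℕ) : Set (Finset ℕ) :=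
  {b | ∃ G : Finset ℕ, G.Nonempty ∧ b = G.sup A}

/-- `⟨A/n⟩`: unions of finitely many entries of `A` contained in `(n, ∞)`. -/
def finUnionsAbove (A : ℕ → Finset ℕ) (n : ℕ) : Set (Finset ℕ) :=
  {b | ∃ G : Finset ℕ, G.Nonempty ∧ (∀ k ∈ G, ∀ i ∈ A k, n < i) ∧ b = G.sup A}

/-- `A ⪯ B` in `FIN`. -/
def PLEF (A B : ℕ → Finset ℕ) : Prop := finUnions A ⊆ finUnions B

/-- `A ⪯* B` in `FIN`. -/
def PLEsF (A B : ℕ → Finset ℕ) : Prop := ∃ n, finUnionsAbove A n ⊆ finUnions B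

/-- Lift a set of finite subsets of `ℕ` to a set of elements of `FIN`. -/
def liftFIN (S : Set (Finset ℕ)) : Set FIN := {a | (a : Finset ℕ) ∈ S}

/-- `U` is an ordered-union ultrafilter on `FIN`. -/
def OrderedUnion (U : Ultrafilter FIN) : Prop :=
  ∀ S ∈ U, ∃ A : ℕ → Finset ℕ, IsBlockF A ∧
    liftFIN (finUnions A) ∈ U ∧ liftFIN (finUnions A) ⊆ S

/-- `U` is stable. -/
def Stable (U : Ultrafilter FIN) : Prop :=
  ∀ As : ℕ → ℕ → Finset ℕ, (∀ n, IsBlockF (As n) ∧ liftFIN (finUnions (As n)) ∈ U) →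
    ∃ B : ℕ → Finset ℕ, IsBlockF B ∧ liftFIN (finUnions B) ∈ U ∧ ∀ n, PLEsF B (As n)

/-- `supp(X)`: the sequence of supports of the entries of `X`. -/
def suppSeq (X : ℕ → (ℕ →₀ F)) : ℕ → Finset ℕ := fun k => (X k).support

/-- `supp(𝓕)`: the collection of `A ⊆ FIN` containing `{supp v : v ∈ S}` for some `S ∈ 𝓕`. -/
def suppFilter (𝓕 : BlockFilter F) : Set (Set FIN) :=
  {A | ∃ S ∈ 𝓕.sets, ∀ a : FIN, (∃ v ∈ S, (a : Finset ℕ) = v.support) → a ∈ A}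

/-- A finite block sequence in `FIN`, as a list. -/
def IsBlockListF (l : List (Finset ℕ)) : Prop :=
  (∀ a ∈ l, a.Nonempty) ∧
    l.Chain' (fun a b : Finset ℕ => ∀ i ∈ a, ∀ j ∈ b, i < j)

end BlockPaper
open BlockPaper

/-- `𝓕` is spread: for every increasing sequence `I_0 < I_1 < ⋯` of nonempty finite
intervals in `ℕ` there is `⟨X⟩ ∈ 𝓕`, `X = (x_n)`, such that for every `n` there is `m`
with `I_0 < supp(x_n) < I_m < supp(x_{n+1})`. -/
def Spread {F : Type} [Field F] (𝓕 : BlockFilter F) : Prop :=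
  ∀ I : ℕ → Finset ℕ, (∀ m, (I m).Nonempty) → (∀ m, ∃ a b, I m = Finset.Icc a b) →
    (∀ m, ∀ i ∈ I m, ∀ j ∈ I (m + 1), i < j) →
    ∃ X : ℕ → (ℕ →₀ F), IsBlock X ∧ spanSet X ∈ 𝓕.sets ∧
      ∀ n, ∃ m, (∀ i ∈ I 0, ∀ j ∈ (X n).support, i < j) ∧
        (∀ j ∈ (X n).support, ∀ i ∈ I m, j < i) ∧
        (∀ i ∈ I m, ∀ j ∈ (X (n + 1)).support, i < j)

namespace SpreadAux

open Finset

/-- cluster heads of `s` at scale `ψ`: elements not reachable from below within `s`. -/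
def clh (ψ : ℕ → ℕ) (s : Finset ℕ) : Finset ℕ :=
  s.filter fun x => ∀ y ∈ s, y < x → ψ y < x

/-- number of clusters of `s` at scale `ψ`. -/
def clc (ψ : ℕ → ℕ) (s : Finset ℕ) : ℕ := (clh ψ s).card

lemma clc_union_gap (ψ : ℕ → ℕ) (hmono : Monotone ψ) (hid : ∀ x, x < ψ x)
    {s t : Finset ℕ} (hgap : ∀ x ∈ s, ∀ y ∈ t, ψ x < y) :
    clc ψ (s ∪ t) = clc ψ s + clc ψ t := by
  have hdisj : ∀ x, x ∈ s → x ∈ t → False := fun x hs ht =>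
    lt_asymm (hid x) (hgap x hs x ht)
  have hlt : ∀ x ∈ s, ∀ y ∈ t, x < y := fun x hx y hy => (hid x).trans (hgap x hx y hy)
  have hset : clh ψ (s ∪ t) = clh ψ s ∪ clh ψ t := by
    ext x
    simp only [clh, mem_filter, mem_union]
    constructor
    · rintro ⟨hx | hx, hall⟩
      · exact Or.inl ⟨hx, fun y hy hyx => hall y (Or.inl hy) hyx⟩
      · exact Or.inr ⟨hx, fun y hy hyx => hall y (Or.inr hy) hyx⟩
    · rintro (⟨hx, hall⟩ | ⟨hx, hall⟩)
      · refine ⟨Or.inl hx, ?_⟩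
        rintro y (hy | hy) hyx
        · exact hall y hy hyx
        · exact absurd hyx (not_lt.2 (hlt x hx y hy).le)
      · refine ⟨Or.inr hx, ?_⟩
        rintro y (hy | hy) hyx
        · exact hgap y hy x hx
        · exact hall y hy hyx
  have hdisj2 : Disjoint (clh ψ s) (clh ψ t) := by
    rw [Finset.disjoint_left]
    intro x hx hx'
    exact hdisj x (Finset.mem_of_mem_filter x hx) (Finset.mem_of_mem_filter x hx')
  rw [clc, hset, Finset.card_union_of_disjoint hdisj2]; rfl

lemma clc_union_merge (ψ : ℕ → ℕ) (hmono : Monotone ψ) (hid : ∀ x, x < ψ x)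
    {s t : Finset ℕ} (hs : s.Nonempty) (ht : t.Nonempty)
    (hlt : ∀ x ∈ s, ∀ y ∈ t, x < y)
    (hm : t.min' ht ≤ ψ (s.max' hs)) :
    clc ψ (s ∪ t) + 1 = clc ψ s + clc ψ t := by
  have hdisj : ∀ x, x ∈ s → x ∈ t → False := fun x hx hx' => lt_irrefl x (hlt x hx x hx')
  have hset : clh ψ (s ∪ t) = clh ψ s ∪ (clh ψ t).erase (t.min' ht) := by
    ext x
    simp only [clh, Finset.mem_filter, Finset.mem_union, Finset.mem_erase]
    constructor
    · rintro ⟨hx | hx, hall⟩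
      · exact Or.inl ⟨hx, fun y hy hyx => hall y (Or.inl hy) hyx⟩
      · refine Or.inr ⟨?_, hx, fun y hy hyx => hall y (Or.inr hy) hyx⟩
        rintro rfl
        have hblt : s.max' hs < t.min' ht := hlt _ (s.max'_mem hs) _ (t.min'_mem ht)
        exact absurd (hall (s.max' hs) (Or.inl (s.max'_mem hs)) hblt) (not_lt.2 hm)
    · rintro (⟨hx, hall⟩ | ⟨hxa, hx, hall⟩)
      · refine ⟨Or.inl hx, ?_⟩
        rintro y (hy | hy) hyx
        · exact hall y hy hyx
        · exact absurd hyx (not_lt.2 (hlt x hx y hy).le)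
      · refine ⟨Or.inr hx, ?_⟩
        rintro y (hy | hy) hyx
        · have h1 : y ≤ s.max' hs := s.le_max' y hy
          have h2 : ψ y ≤ ψ (s.max' hs) := hmono h1
          have h3 : ψ (s.max' hs) ≤ ψ (t.min' ht) :=
            hmono (hlt _ (s.max'_mem hs) _ (t.min'_mem ht)).le
          have h4 : ψ (t.min' ht) < x :=
            hall (t.min' ht) (t.min'_mem ht)
              (lt_of_le_of_ne (t.min'_le x hx) (Ne.symm hxa))
          omega
        · exact hall y hy hyx
  have hamem : t.min' ht ∈ clh ψ t := by
    simp only [clh, Finset.mem_filter]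
    exact ⟨t.min'_mem ht, fun y hy hylt => absurd hylt (not_lt.2 (t.min'_le y hy))⟩
  have hdisj2 : Disjoint (clh ψ s) ((clh ψ t).erase (t.min' ht)) := by
    rw [Finset.disjoint_left]
    intro x hx hx'
    exact hdisj x (Finset.mem_of_mem_filter x hx)
      (Finset.mem_of_mem_filter x (Finset.mem_of_mem_erase hx'))
  have hcard : clc ψ (s ∪ t) = clc ψ s + ((clh ψ t).card - 1) := by
    rw [clc, hset, Finset.card_union_of_disjoint hdisj2, Finset.card_erase_of_mem hamem]; rfl
  have hpos : 0 < (clh ψ t).card := Finset.card_pos.2 ⟨_, hamem⟩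
  have hct : clc ψ t = (clh ψ t).card := rfl
  omega

lemma clc_biUnion (ψ : ℕ → ℕ) (hmono : Monotone ψ) (hid : ∀ x, x < ψ x)
    (S : ℕ → Finset ℕ)
    (hgap : ∀ i j, i < j → ∀ x ∈ S i, ∀ y ∈ S j, ψ x < y)
    (G : Finset ℕ) : clc ψ (G.biUnion S) = ∑ i ∈ G, clc ψ (S i) := by
  induction G using Finset.induction_on_max with
  | empty => simp [clc, clh]
  | insert a G ha ih =>
    have hna : a ∉ G := fun hmem => lt_irrefl a (ha a hmem)
    have hg : ∀ x ∈ G.biUnion S, ∀ y ∈ S a, ψ x < y := by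
      intro x hx y hy
      obtain ⟨i, hiG, hxi⟩ := Finset.mem_biUnion.1 hx
      exact hgap i a (ha i hiG) x hxi y hy
    rw [Finset.biUnion_insert, Finset.union_comm, clc_union_gap ψ hmono hid hg, ih,
      Finset.sum_insert hna]
    exact Nat.add_comm _ _

variable {F : Type} [Field F]

lemma support_span_structure {u : ℕ → (ℕ →₀ F)}
    (hdisj : ∀ i j, i ≠ j → Disjoint (u i).support (u j).support)
    {v : ℕ →₀ F} (hv : v ∈ Submodule.span F (Set.range u)) (hv0 : v ≠ 0) :
    ∃ G : Finset ℕ, G.Nonempty ∧ v.support = G.biUnion fun i => (u i).support := by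
  rw [Finsupp.mem_span_range_iff_exists_finsupp] at hv
  obtain ⟨c, hc⟩ := hv
  have hdisj' : ∀ i j, i ≠ j → Disjoint (c i • u i).support (c j • u j).support :=
    fun i j hij => (hdisj i j hij).mono Finsupp.support_smul Finsupp.support_smul
  have hce : (c.sum fun i a => a • u i) = ∑ i ∈ c.support, c i • u i := rfl
  have hsupp : v.support = c.support.biUnion fun i => (c i • u i).support := by
    rw [← hc, hce, Finsupp.support_sum_eq_biUnion _ hdisj']
  refine ⟨c.support, ?_, ?_⟩
  · rcases c.support.eq_empty_or_nonempty with he | hne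
    · exfalso
      apply hv0
      rw [← Finsupp.support_eq_empty, hsupp, he]
      simp
    · exact hne
  · refine hsupp.trans (Finset.biUnion_congr rfl ?_)
    intro i hi
    exact Finsupp.support_smul_eq (Finsupp.mem_support_iff.1 hi)

lemma support_subset_of_mem_span {S : Set (ℕ →₀ F)} {B : Finset ℕ}
    (hS : ∀ w ∈ S, w.support ⊆ B) {v : ℕ →₀ F}
    (hv : v ∈ Submodule.span F S) : v.support ⊆ B := by
  induction hv using Submodule.span_induction with
  | mem w hw => exact hS w hw
  | zero => simp
  | add x y _ _ hx hy =>
    exact Finsupp.support_add.trans (Finset.union_subset hx hy)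
  | smul a x _ hx => exact (Finsupp.support_smul).trans hx

lemma not_finite_of_block {u : ℕ → (ℕ →₀ F)} (h0 : ∀ i, u i ≠ 0)
    (hdisj : ∀ i j, i ≠ j → Disjoint (u i).support (u j).support) :
    ¬ Module.Finite F (Submodule.span F (Set.range u)) := by
  intro hfin
  have hfg : (Submodule.span F (Set.range u)).FG := by
    rw [← Module.Finite.iff_fg]
    exact hfin
  obtain ⟨s, hs⟩ := hfg
  classical
  set B : Finset ℕ := s.biUnion Finsupp.support with hB
  have hS : ∀ w ∈ (↑s : Set (ℕ →₀ F)), w.support ⊆ B := by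
    intro w hw
    intro x hx
    exact Finset.mem_biUnion.2 ⟨w, hw, hx⟩
  have hmem : ∀ i, u i ∈ Submodule.span F (↑s : Set (ℕ →₀ F)) := by
    intro i
    rw [hs]
    exact Submodule.subset_span ⟨i, rfl⟩
  have hsub : ∀ i, (u i).support ⊆ B := fun i =>
    support_subset_of_mem_span hS (hmem i)
  have hne : ∀ i, (u i).support.Nonempty := fun i =>
    Finsupp.support_nonempty_iff.2 (h0 i)
  set f : ℕ → ℕ := fun i => (u i).support.min' (hne i) with hf
  have hfmem : ∀ i, f i ∈ (u i).support := fun i => Finset.min'_mem _ _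
  have hinj : Function.Injective f := by
    intro i j hij
    by_contra hne'
    have h1 : f i ∈ (u i).support := hfmem i
    have h2 : f i ∈ (u j).support := hij ▸ hfmem j
    exact (Finset.disjoint_left.1 (hdisj i j hne')) h1 h2
  have hcard : ((Finset.range (B.card + 1)).image f).card = B.card + 1 := by
    rw [Finset.card_image_of_injective _ hinj, Finset.card_range]
  have hsubB : (Finset.range (B.card + 1)).image f ⊆ B := by
    intro x hx
    obtain ⟨i, _, rfl⟩ := Finset.mem_image.1 hx
    exact hsub i (hfmem i)
  have := Finset.card_le_card hsubB
  omega

end SpreadAux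

/-- Every `(p⁺)`-filter on `E` is spread. -/
theorem stmt15 {F : Type} [Field F] [Countable F] (𝓕 : BlockFilter F)
    (h : PPlus 𝓕) : Spread 𝓕 := by
  obtain ⟨hfull, -⟩ := h
  intro I hIne hIcc hIord
  clear hIcc
  classical
  -- basic facts about the intervals
  have crossI : ∀ m d, ∀ i ∈ I m, ∀ j ∈ I (m + d + 1), i < j := by
    intro m d
    induction d with
    | zero => exact hIord m
    | succ d ih =>
      intro i hi j hj
      obtain ⟨z, hz⟩ := hIne (m + d + 1)
      exact (ih i hi z hz).trans (hIord (m + d + 1) z hz j hj)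
  have crossI' : ∀ m m', m < m' → ∀ i ∈ I m, ∀ j ∈ I m', i < j := by
    intro m m' hmm'
    have hcalc : m + (m' - m - 1) + 1 = m' := by omega
    have := crossI m (m' - m - 1)
    rwa [hcalc] at this
  have ILB : ∀ m, ∀ i ∈ I m, m ≤ i := by
    intro m
    induction m with
    | zero => intro i _; exact Nat.zero_le i
    | succ m ih =>
      intro i hi
      obtain ⟨z, hz⟩ := hIne m
      exact Nat.succ_le_of_lt (lt_of_le_of_lt (ih z hz) (hIord m z hz i hi))
  set ψ : ℕ → ℕ := fun b => (I (b + 1)).sup id with hψdef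
  have hid : ∀ b, b < ψ b := by
    intro b
    obtain ⟨z, hz⟩ := hIne (b + 1)
    have h1 : b + 1 ≤ z := ILB (b + 1) z hz
    have h2 : z ≤ (I (b + 1)).sup id := Finset.le_sup (f := id) hz
    simp only [hψdef]
    omega
  have hmono : Monotone ψ := by
    intro b b' hbb
    rcases eq_or_lt_of_le hbb with rfl | hlt
    · exact le_rfl
    · simp only [hψdef]
      apply Finset.sup_le
      intro x hx
      obtain ⟨z, hz⟩ := hIne (b' + 1)
      have hx' : x < z := crossI' (b + 1) (b' + 1) (by omega) x hx z hz
      exact le_trans hx'.le (Finset.le_sup (f := id) hz)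
  set t₀ : ℕ := (I 0).sup id with ht₀
  -- the dense set
  set D : Set (ℕ →₀ F) :=
    {v | (∀ i ∈ I 0, ∀ j ∈ v.support, i < j) ∧ Even (SpreadAux.clc ψ v.support)} with hD
  have hdense : FDense 𝓕 D := by
    intro X hbX hXmem
    obtain ⟨hX0, hXord⟩ := hbX
    have hXsne : ∀ k, (X k).support.Nonempty := fun k =>
      Finsupp.support_nonempty_iff.2 (hX0 k)
    have XLB : ∀ k, ∀ j ∈ (X k).support, k ≤ j := by
      intro k
      induction k with
      | zero => intro j _; exact Nat.zero_le j
      | succ k ih =>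
        intro j hj
        obtain ⟨z, hz⟩ := hXsne k
        exact Nat.succ_le_of_lt (lt_of_le_of_lt (ih z hz) (hXord k z hz j hj))
    have hXspan : ∀ k, X k ∈ Submodule.span F (Set.range X) := fun k =>
      Submodule.subset_span ⟨k, rfl⟩
    -- one-step construction
    have EX : ∀ t : ℕ, ∃ w : ℕ →₀ F, w ∈ Submodule.span F (Set.range X) ∧ w ≠ 0 ∧
        (∀ j ∈ w.support, t < j) ∧ Even (SpreadAux.clc ψ w.support) := by
      intro t
      by_cases h1 : Even (SpreadAux.clc ψ (X (t + 1)).support)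
      · exact ⟨X (t + 1), hXspan _, hX0 _,
          fun j hj => lt_of_lt_of_le (Nat.lt_succ_self t) (XLB _ j hj), h1⟩
      · set b : ℕ := (X (t + 1)).support.sup id with hb
        set k' : ℕ := ψ b + 1 with hk'
        have hgapst : ∀ x ∈ (X (t + 1)).support, ∀ y ∈ (X k').support, ψ x < y := by
          intro x hx y hy
          have ha : ψ x ≤ ψ b := hmono (Finset.le_sup (f := id) hx)
          have hbb : k' ≤ y := XLB k' y hy
          omega
        have htlt : ∀ j ∈ (X k').support, t < j := by
          intro j hj
          have h2 : k' ≤ j := XLB k' j hj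
          obtain ⟨z, hz⟩ := hXsne (t + 1)
          have h3 : t + 1 ≤ z := XLB _ z hz
          have h4 : z ≤ b := Finset.le_sup (f := id) hz
          have h5 := hid b
          omega
        by_cases h2 : Even (SpreadAux.clc ψ (X k').support)
        · exact ⟨X k', hXspan _, hX0 _, htlt, h2⟩
        · have hdisj2 : Disjoint (X (t + 1)).support (X k').support := by
            rw [Finset.disjoint_left]
            intro x hx hx'
            exact absurd (hgapst x hx x hx') (not_lt.2 (hid x).le)
          have hsupp : (X (t + 1) + X k').support
              = (X (t + 1)).support ∪ (X k').support := Finsupp.support_add_eq hdisj2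
          refine ⟨X (t + 1) + X k', Submodule.add_mem _ (hXspan _) (hXspan _), ?_, ?_, ?_⟩
          · rw [← Finsupp.support_nonempty_iff, hsupp]
            exact (hXsne (t + 1)).mono Finset.subset_union_left
          · intro j hj
            rw [hsupp] at hj
            rcases Finset.mem_union.1 hj with hj | hj
            · exact lt_of_lt_of_le (Nat.lt_succ_self t) (XLB _ j hj)
            · exact htlt j hj
          · rw [hsupp, SpreadAux.clc_union_gap ψ hmono hid hgapst]
            exact (Nat.not_even_iff_odd.1 h1).add_odd (Nat.not_even_iff_odd.1 h2)
    choose f hf1 hf2 hf3 hf4 using EX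
    -- the recursive block sequence
    have hgex : ∃ g : ℕ → (ℕ →₀ F), g 0 = f t₀ ∧
        ∀ n, g (n + 1) = f (ψ ((g n).support.sup id)) :=
      ⟨fun n => Nat.rec (f t₀) (fun _ prev => f (ψ (prev.support.sup id))) n,
        rfl, fun _ => rfl⟩
    obtain ⟨g, hg0, hgs⟩ := hgex
    have hgne : ∀ n, g n ≠ 0 := by
      intro n
      cases n with
      | zero => rw [hg0]; exact hf2 _
      | succ n => rw [hgs]; exact hf2 _
    have hgspan : ∀ n, g n ∈ Submodule.span F (Set.range X) := by
      intro n
      cases n with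
      | zero => rw [hg0]; exact hf1 _
      | succ n => rw [hgs]; exact hf1 _
    have hgeven : ∀ n, Even (SpreadAux.clc ψ (g n).support) := by
      intro n
      cases n with
      | zero => rw [hg0]; exact hf4 _
      | succ n => rw [hgs]; exact hf4 _
    have hgsne : ∀ n, (g n).support.Nonempty := fun n =>
      Finsupp.support_nonempty_iff.2 (hgne n)
    have hgap1 : ∀ n, ∀ x ∈ (g n).support, ∀ y ∈ (g (n + 1)).support, ψ x < y := by
      intro n x hx y hy
      rw [hgs] at hy
      have h1 : ψ x ≤ ψ ((g n).support.sup id) := hmono (Finset.le_sup (f := id) hx)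
      exact lt_of_le_of_lt h1 (hf3 _ y hy)
    have hgapd : ∀ m d, ∀ x ∈ (g m).support, ∀ y ∈ (g (m + d + 1)).support, ψ x < y := by
      intro m d
      induction d with
      | zero => exact hgap1 m
      | succ d ih =>
        intro x hx y hy
        obtain ⟨z, hz⟩ := hgsne (m + d + 1)
        have h1 : ψ x < z := ih x hx z hz
        have h2 : ψ z < y := hgap1 _ z hz y hy
        have h3 := hid z
        omega
    have hgap' : ∀ m m', m < m' → ∀ x ∈ (g m).support, ∀ y ∈ (g m').support, ψ x < y := by
      intro m m' hmm'
      have hcalc : m + (m' - m - 1) + 1 = m' := by omega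
      have := hgapd m (m' - m - 1)
      rwa [hcalc] at this
    have hgt₀ : ∀ n, ∀ j ∈ (g n).support, t₀ < j := by
      intro n
      induction n with
      | zero => rw [hg0]; exact hf3 t₀
      | succ n ih =>
        intro j hj
        rw [hgs] at hj
        obtain ⟨z, hz⟩ := hgsne n
        have h1 : t₀ < z := ih z hz
        have h2 : z ≤ (g n).support.sup id := Finset.le_sup (f := id) hz
        have h3 := hid ((g n).support.sup id)
        have h4 := hf3 (ψ ((g n).support.sup id)) j hj
        omega
    have hgdisj : ∀ i j, i ≠ j → Disjoint (g i).support (g j).support := by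
      intro i j hij
      rcases Nat.lt_or_ge i j with hlt | hge
      · rw [Finset.disjoint_left]
        intro x hx hx'
        exact absurd (hgap' i j hlt x hx x hx') (not_lt.2 (hid x).le)
      · have hlt : j < i := lt_of_le_of_ne hge (Ne.symm hij)
        rw [Finset.disjoint_right]
        intro x hx hx'
        exact absurd (hgap' j i hlt x hx x hx') (not_lt.2 (hid x).le)
    refine ⟨Submodule.span F (Set.range g), ?_, ?_⟩
    · exact SpreadAux.not_finite_of_block hgne hgdisj
    · rintro v ⟨hvmem, hv0⟩
      have hv0' : v ≠ 0 := by simpa using hv0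
      have hvmem' : v ∈ Submodule.span F (Set.range g) := hvmem
      obtain ⟨G, hGne, hGsupp⟩ := SpreadAux.support_span_structure hgdisj hvmem' hv0'
      have hvX : v ∈ Submodule.span F (Set.range X) := by
        refine Submodule.span_le.2 ?_ hvmem'
        rintro w ⟨n, rfl⟩
        exact hgspan n
      refine ⟨⟨hv0', hvX⟩, ?_, ?_⟩
      · intro i hi j hj
        rw [hGsupp] at hj
        obtain ⟨k, _, hj'⟩ := Finset.mem_biUnion.1 hj
        exact lt_of_le_of_lt (Finset.le_sup (f := id) hi) (hgt₀ k j hj')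
      · rw [hGsupp, SpreadAux.clc_biUnion ψ hmono hid _ hgap' G]
        exact Finset.sum_induction _ Even (fun a b => Even.add) Even.zero
          (fun i _ => hgeven i)
  -- apply fullness and extract a block basis
  have hDmem : D \ {0} ∈ 𝓕.sets := hfull D hdense
  obtain ⟨Z, hbZ, hZmem, hZsub⟩ := 𝓕.blockBase _ hDmem
  refine ⟨Z, hbZ, hZmem, ?_⟩
  intro n
  obtain ⟨hZ0, hZord⟩ := hbZ
  have hsne : (Z n).support.Nonempty := Finsupp.support_nonempty_iff.2 (hZ0 n)
  have htne : (Z (n + 1)).support.Nonempty := Finsupp.support_nonempty_iff.2 (hZ0 (n + 1))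
  have hmemn : Z n ∈ spanSet Z := ⟨hZ0 n, Submodule.subset_span ⟨n, rfl⟩⟩
  have hmemn1 : Z (n + 1) ∈ spanSet Z := ⟨hZ0 (n + 1), Submodule.subset_span ⟨n + 1, rfl⟩⟩
  have hdisjZ : Disjoint (Z n).support (Z (n + 1)).support := by
    rw [Finset.disjoint_left]
    intro x hx hx'
    exact lt_irrefl x (hZord n x hx x hx')
  have hsuppZ : (Z n + Z (n + 1)).support = (Z n).support ∪ (Z (n + 1)).support :=
    Finsupp.support_add_eq hdisjZ
  have hmemsum : Z n + Z (n + 1) ∈ spanSet Z := by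
    refine ⟨?_, Submodule.add_mem _ hmemn.2 hmemn1.2⟩
    rw [← Finsupp.support_nonempty_iff, hsuppZ]
    exact hsne.mono Finset.subset_union_left
  obtain ⟨⟨hI0n, hEn⟩, -⟩ := hZsub hmemn
  obtain ⟨⟨hI0n1, hEn1⟩, -⟩ := hZsub hmemn1
  obtain ⟨⟨-, hEsum⟩, -⟩ := hZsub hmemsum
  rw [hsuppZ] at hEsum
  set b : ℕ := (Z n).support.max' hsne with hbdef
  have hgapZ : ∀ j ∈ (Z (n + 1)).support, ψ b < j := by
    by_contra hcon
    push_neg at hcon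
    obtain ⟨j0, hj0, hj0le⟩ := hcon
    have hmerge : (Z (n + 1)).support.min' htne ≤ ψ ((Z n).support.max' hsne) :=
      le_trans (Finset.min'_le _ _ hj0) hj0le
    have hkey := SpreadAux.clc_union_merge ψ hmono hid hsne htne
      (fun x hx y hy => hZord n x hx y hy) hmerge
    obtain ⟨p, hp⟩ := hEn
    obtain ⟨q, hq⟩ := hEn1
    obtain ⟨r, hr⟩ := hEsum
    omega
  refine ⟨b + 1, hI0n, ?_, ?_⟩
  · intro j hj i hi
    have h1 : j ≤ b := Finset.le_max' _ j hj
    have h2 : b + 1 ≤ i := ILB (b + 1) i hi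
    omega
  · intro i hi j hj
    have h1 : i ≤ ψ b := by
      simp only [hψdef]
      exact Finset.le_sup (f := id) hi
    exact lt_of_le_of_lt h1 (hgapZ j hj)
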